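/- Let h : Fin K → Fin N → ℝ₊, ζ ∈ (0,1), P > 0, P_peak ≥ P/N, and Ē : Fin K → ℝ₊. The feasibility of the TS problem (existence of time ratios and powers satisfying all EH, total power, peak power, and time constraints) is equivalent to the existence of p : Fin N → ℝ with 0 ≤ pₙ ≤ P_peak, Σₙ pₙ ≤ P, and ζ·Σₙ h_{k,n}·pₙ ≥ Ēₖ for all k. -/

import Mathlib

/-- Feasibility of the multiuser TS problem is equivalent to feasibility of the
linear program in the power-slot powers (Problem (4)). -/
theorem stmt_15 (K N : ℕ) (hN : 0 < N) (h : Fin K → Fin N → ℝ)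
    (hh : ∀ k n, 0 ≤ h k n) (ζ P Ppeak : ℝ) (hζ0 : 0 < ζ) (hζ1 : ζ < 1)
    (hP : 0 < P) (hPpeak : P / (N : ℝ) ≤ Ppeak)
    (E : Fin K → ℝ) (hE : ∀ k, 0 ≤ E k) :
    (∃ (α : Fin (K + 1) → ℝ) (p : Fin (K + 1) → Fin N → ℝ),
      (∀ k, 0 ≤ α k ∧ α k ≤ 1) ∧ (∑ k, α k) ≤ 1 ∧
      (∀ k n, 0 ≤ p k n ∧ p k n ≤ Ppeak) ∧
      (∑ k, α k * ∑ n, p k n) ≤ P ∧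
      (∀ k : Fin K, ζ * ∑ i ∈ Finset.univ.erase k.castSucc,
          α i * ∑ n, h k n * p i n ≥ E k)) ↔
    (∃ p : Fin N → ℝ, (∀ n, 0 ≤ p n ∧ p n ≤ Ppeak) ∧ (∑ n, p n) ≤ P ∧
      (∀ k, ζ * ∑ n, h k n * p n ≥ E k)) := by
  have hPpeak0 : 0 ≤ Ppeak :=
    le_trans (le_of_lt (div_pos hP (by exact_mod_cast hN))) hPpeak
  constructor
  · rintro ⟨α, p, hα, hαsum, hp, hpow, hEH⟩
    have hα0 : ∀ i, 0 ≤ α i := fun i => (hα i).1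
    refine ⟨fun n => ∑ i, α i * p i n, fun n => ⟨?_, ?_⟩, ?_, fun k => ?_⟩
    · exact Finset.sum_nonneg fun i _ => mul_nonneg (hα0 i) (hp i n).1
    · calc ∑ i, α i * p i n ≤ ∑ i, α i * Ppeak :=
            Finset.sum_le_sum fun i _ =>
              mul_le_mul_of_nonneg_left (hp i n).2 (hα0 i)
        _ = (∑ i, α i) * Ppeak := (Finset.sum_mul _ _ _).symm
        _ ≤ 1 * Ppeak := mul_le_mul_of_nonneg_right hαsum hPpeak0
        _ = Ppeak := one_mul _
    · calc ∑ n, ∑ i, α i * p i n = ∑ i, ∑ n, α i * p i n := Finset.sum_comm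
        _ = ∑ i, α i * ∑ n, p i n := by
            simp [Finset.mul_sum]
        _ ≤ P := hpow
    · have key : ∑ n, h k n * ∑ i, α i * p i n
          = ∑ i, α i * ∑ n, h k n * p i n := by
        simp_rw [Finset.mul_sum]
        rw [Finset.sum_comm]
        exact Finset.sum_congr rfl fun i _ =>
          Finset.sum_congr rfl fun n _ => by ring
      rw [key]
      have hsub : ∑ i ∈ Finset.univ.erase k.castSucc,
          α i * ∑ n, h k n * p i n ≤ ∑ i, α i * ∑ n, h k n * p i n :=
        Finset.sum_le_sum_of_subset_of_nonneg (Finset.erase_subset _ _)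
          (fun i _ _ => mul_nonneg (hα0 i)
            (Finset.sum_nonneg fun n _ => mul_nonneg (hh k n) (hp i n).1))
      exact le_trans (hEH k) (mul_le_mul_of_nonneg_left hsub (le_of_lt hζ0))
  · rintro ⟨p, hp, hsum, hEH⟩
    refine ⟨fun i => if i = Fin.last K then 1 else 0,
      fun _ n => p n, fun i => ?_, ?_, fun i n => hp n, ?_, fun k => ?_⟩
    · by_cases hi : i = Fin.last K <;> simp [hi]
    · simp
    · have : ∑ i : Fin (K+1), (if i = Fin.last K then (1:ℝ) else 0) * ∑ n, p n
          = ∑ n, p n := by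
        rw [Finset.sum_eq_single (Fin.last K)] <;> simp (config := {contextual := true})
      rw [this]; exact hsum
    · have hmem : Fin.last K ∈ Finset.univ.erase k.castSucc := by
        simp [Finset.mem_erase, (Fin.castSucc_lt_last k).ne']
      have : ∑ i ∈ Finset.univ.erase k.castSucc,
          (if i = Fin.last K then (1:ℝ) else 0) * ∑ n, h k n * p n
          = ∑ n, h k n * p n := by
        rw [Finset.sum_eq_single_of_mem (Fin.last K) hmem] <;>
          simp (config := {contextual := true})
      rw [this]; exact hEH k
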